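/- Let g ≥ 1. For every W ∈ 𝔻_g, the matrix I_g − W is invertible and Φ_g(W) := i(I_g + W)(I_g − W)⁻¹ lies in ℍ_g. For every Ω ∈ ℍ_g, the matrix Ω + iI_g is invertible and Ψ_g(Ω) := (Ω − iI_g)(Ω + iI_g)⁻¹ lies in 𝔻_g. Moreover Ψ_g(Φ_g(W)) = W for all W ∈ 𝔻_g and Φ_g(Ψ_g(Ω)) = Ω for all Ω ∈ ℍ_g; hence the Cayley transform Φ_g is a bijection from 𝔻_g onto ℍ_g with inverse Ψ_g. -/

import Mathlib

open Matrix
open scoped ComplexOrder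

/-- Membership in the Siegel upper half space `ℍ_g`. -/
def inSiegel (g : ℕ) (Ω : Matrix (Fin g) (Fin g) ℂ) : Prop :=
  Ωᵀ = Ω ∧ (Ω.map Complex.im).PosDef

/-- Membership in the generalized unit disk `𝔻_g`. -/
def inDisk (g : ℕ) (W : Matrix (Fin g) (Fin g) ℂ) : Prop :=
  Wᵀ = W ∧ (1 - W.map (starRingEnd ℂ) * W).PosDef

/-- The Cayley transform `Φ_g(W) = i(I + W)(I − W)⁻¹`. -/
noncomputable def cayley (g : ℕ) (W : Matrix (Fin g) (Fin g) ℂ) :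
    Matrix (Fin g) (Fin g) ℂ := Complex.I • ((1 + W) * (1 - W)⁻¹)

/-- The inverse Cayley transform `Ψ_g(Ω) = (Ω − iI)(Ω + iI)⁻¹`. -/
noncomputable def cayleyInv (g : ℕ) (Ω : Matrix (Fin g) (Fin g) ℂ) :
    Matrix (Fin g) (Fin g) ℂ := (Ω - Complex.I • 1) * (Ω + Complex.I • 1)⁻¹

section Helpers

set_option linter.unusedSectionVars false

variable {n : Type*} [Fintype n] [DecidableEq n]

/-- the quadratic form of the conjTranspose. -/
lemma star_quad (M : Matrix n n ℂ) (v : n → ℂ) :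
    star (star v ⬝ᵥ (M *ᵥ v)) = star v ⬝ᵥ (Mᴴ *ᵥ v) := by
  rw [star_dotProduct, star_star, star_mulVec, dotProduct_mulVec]

/-- conjugation of a PosDef matrix by an invertible matrix. -/
lemma posDef_conj {P : Matrix n n ℂ} (hP : P.PosDef) (B : Matrix n n ℂ)
    (hB : IsUnit B.det) : (Bᴴ * P * B).PosDef := by
  refine Matrix.PosDef.of_dotProduct_mulVec_pos (isHermitian_conjTranspose_mul_mul B hP.1) (fun x hx => ?_)
  have hBx : B *ᵥ x ≠ 0 := by
    have hinj := Matrix.mulVec_injective_iff_isUnit.mpr ((Matrix.isUnit_iff_isUnit_det B).2 hB)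
    exact (hinj.ne_iff' (Matrix.mulVec_zero B)).2 hx
  have := hP.dotProduct_mulVec_pos hBx
  rwa [star_mulVec, dotProduct_mulVec, vecMul_vecMul, ← dotProduct_mulVec,
    Matrix.mulVec_mulVec] at this

lemma real_quad (N : Matrix n n ℝ) (x : n → ℝ) :
    ((fun i => (x i : ℂ)) ⬝ᵥ ((N.map Complex.ofReal) *ᵥ fun i => (x i : ℂ)))
      = ((x ⬝ᵥ (N *ᵥ x) : ℝ) : ℂ) := by
  have h1 : (N.map Complex.ofReal) *ᵥ (fun i => (x i : ℂ)) = fun i => (((N *ᵥ x) i : ℝ) : ℂ) := by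
    funext i
    exact (RingHom.map_mulVec Complex.ofRealHom N x i).symm
  rw [h1]
  exact (RingHom.map_dotProduct Complex.ofRealHom x (N *ᵥ x)).symm

lemma swap_quad {M : Matrix n n ℂ} (hMsym : Mᵀ = M) (x y : n → ℂ) :
    x ⬝ᵥ (M *ᵥ y) = y ⬝ᵥ (M *ᵥ x) := by
  have h1 : x ᵥ* M = M *ᵥ x := by
    conv_lhs => rw [← hMsym]
    exact vecMul_transpose M x
  rw [dotProduct_mulVec, h1, dotProduct_comm]

/-- complexification of a real positive definite symmetric matrix. -/
lemma map_posDef {N : Matrix n n ℝ} (hN : N.PosDef) :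
    (N.map Complex.ofReal).PosDef := by
  have hsym : Nᵀ = N := hN.1
  set M := N.map Complex.ofReal with hM
  have hMsym : Mᵀ = M := by rw [hM, ← Matrix.transpose_map, hsym]
  refine Matrix.PosDef.of_dotProduct_mulVec_pos ?_ ?_
  · ext i j
    simp only [conjTranspose_apply, Matrix.map_apply, RCLike.star_def, Complex.conj_ofReal, hM]
    exact_mod_cast congrFun (congrFun hsym i) j
  intro v hv
  set a : n → ℝ := fun i => (v i).re with ha
  set b : n → ℝ := fun i => (v i).im with hb
  set A : n → ℂ := fun i => (a i : ℂ) with hA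
  set B : n → ℂ := fun i => (b i : ℂ) with hB
  have hv' : v = A + Complex.I • B := by
    funext i
    simp only [Pi.add_apply, Pi.smul_apply, smul_eq_mul, hA, hB, ha, hb]
    rw [mul_comm]
    exact (Complex.re_add_im (v i)).symm
  have hstar : star v = A - Complex.I • B := by
    funext i
    simp only [Pi.star_apply, Pi.sub_apply, Pi.smul_apply, smul_eq_mul, hA, hB, ha, hb,
      RCLike.star_def]
    apply Complex.ext <;> simp
  have expand : star v ⬝ᵥ (M *ᵥ v)
      = A ⬝ᵥ (M *ᵥ A) + B ⬝ᵥ (M *ᵥ B)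
        + Complex.I * (A ⬝ᵥ (M *ᵥ B) - B ⬝ᵥ (M *ᵥ A)) := by
    rw [hstar]
    conv_lhs => rw [hv']
    simp only [mulVec_add, mulVec_smul, dotProduct_add, sub_dotProduct, dotProduct_smul,
      smul_dotProduct, smul_eq_mul]
    ring_nf
    simp only [Complex.I_sq]
    ring
  rw [expand, swap_quad hMsym A B, sub_self, mul_zero, add_zero, real_quad, real_quad,
    ← Complex.ofReal_add]
  rw [Complex.zero_lt_real]
  have hab : a ≠ 0 ∨ b ≠ 0 := by
    by_contra h
    push_neg at h
    apply hv
    funext i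
    have h1 : (v i).re = 0 := congrFun h.1 i
    have h2 : (v i).im = 0 := congrFun h.2 i
    apply Complex.ext <;> simp [h1, h2]
  have qa : 0 ≤ a ⬝ᵥ (N *ᵥ a) := by simpa using hN.posSemidef.dotProduct_mulVec_nonneg a
  have qb : 0 ≤ b ⬝ᵥ (N *ᵥ b) := by simpa using hN.posSemidef.dotProduct_mulVec_nonneg b
  rcases hab with h | h
  · have := hN.dotProduct_mulVec_pos h
    simp only [star_trivial] at this
    linarith
  · have := hN.dotProduct_mulVec_pos h
    simp only [star_trivial] at this
    linarith

/-- reverse bridge. -/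
lemma posDef_of_map {N : Matrix n n ℝ} (hsym : Nᵀ = N)
    (h : (N.map Complex.ofReal).PosDef) : N.PosDef := by
  refine Matrix.PosDef.of_dotProduct_mulVec_pos hsym (fun x hx => ?_)
  have hx' : (fun i => (x i : ℂ)) ≠ 0 := by
    intro h0
    apply hx
    funext i
    simpa using congrFun h0 i
  have h2 := h.dotProduct_mulVec_pos hx'
  have hstar : star (fun i => (x i : ℂ)) = fun i => (x i : ℂ) := by
    funext i; simp
  rw [hstar, real_quad, Complex.zero_lt_real] at h2
  simpa using h2

/-- symmetric matrix: entrywise conjugate equals conjTranspose. -/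
lemma map_conj_eq_conjTranspose {M : Matrix n n ℂ} (hsym : Mᵀ = M) :
    M.map (starRingEnd ℂ) = Mᴴ := by
  ext i j
  have : M j i = M i j := congrFun (congrFun hsym i) j
  simp [conjTranspose_apply, Matrix.map_apply, this, RCLike.star_def]

/-- imaginary part decomposition for a symmetric complex matrix. -/
lemma sub_conjTranspose_eq {M : Matrix n n ℂ} (hsym : Mᵀ = M) :
    M - Mᴴ = (2 * Complex.I) • ((M.map Complex.im).map Complex.ofReal) := by
  ext i j
  have h1 : M j i = M i j := congrFun (congrFun hsym i) j
  simp only [Matrix.sub_apply, conjTranspose_apply, Matrix.smul_apply, Matrix.map_apply,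
    RCLike.star_def, h1, smul_eq_mul]
  rw [Complex.sub_conj]
  push_cast
  ring

lemma commute_nonsing_inv {A B : Matrix n n ℂ} (h : A * B = B * A)
    (hB : IsUnit B.det) : A * B⁻¹ = B⁻¹ * A := by
  calc A * B⁻¹ = B⁻¹ * (B * (A * B⁻¹)) := by
        rw [← Matrix.mul_assoc, Matrix.nonsing_inv_mul _ hB, Matrix.one_mul]
    _ = B⁻¹ * A := by
        rw [show B * (A * B⁻¹) = A * (B * B⁻¹) by
          rw [← Matrix.mul_assoc, ← h, Matrix.mul_assoc],
          Matrix.mul_nonsing_inv _ hB, Matrix.mul_one]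

lemma quad_sub_conjTranspose (M : Matrix n n ℂ) (v : n → ℂ) :
    star v ⬝ᵥ (M *ᵥ v) - star (star v ⬝ᵥ (M *ᵥ v)) = star v ⬝ᵥ ((M - Mᴴ) *ᵥ v) := by
  rw [star_quad, sub_mulVec, dotProduct_sub]

lemma disk_det {W : Matrix n n ℂ} (hsym : Wᵀ = W)
    (hP : (1 - W.map (starRingEnd ℂ) * W).PosDef) : IsUnit (1 - W).det := by
  rw [map_conj_eq_conjTranspose hsym] at hP
  rw [isUnit_iff_ne_zero]
  intro hd0
  obtain ⟨v, hv0, hveq⟩ := (Matrix.exists_mulVec_eq_zero_iff).mpr hd0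
  have hWv : W *ᵥ v = v := by
    rw [sub_mulVec, Matrix.one_mulVec, sub_eq_zero] at hveq
    exact hveq.symm
  have hq := hP.dotProduct_mulVec_pos hv0
  rw [sub_mulVec, Matrix.one_mulVec, dotProduct_sub, ← Matrix.mulVec_mulVec, hWv] at hq
  have he : star v ⬝ᵥ (Wᴴ *ᵥ v) = star v ⬝ᵥ v := by
    rw [dotProduct_mulVec, ← star_mulVec, hWv]
  rw [he, sub_self] at hq
  exact lt_irrefl _ hq

lemma cayley_symm {W : Matrix n n ℂ} (hsym : Wᵀ = W) (hdet : IsUnit (1 - W).det) :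
    (Complex.I • ((1 + W) * (1 - W)⁻¹))ᵀ = Complex.I • ((1 + W) * (1 - W)⁻¹) := by
  have hAT : (1 - W)ᵀ = 1 - W := by rw [transpose_sub, transpose_one, hsym]
  have hcomm : (1 + W) * (1 - W) = (1 - W) * (1 + W) := by noncomm_ring
  have hc2 : (1 + W) * (1 - W)⁻¹ = (1 - W)⁻¹ * (1 + W) := commute_nonsing_inv hcomm hdet
  rw [transpose_smul, transpose_mul, Matrix.transpose_nonsing_inv, hAT, transpose_add,
    transpose_one, hsym, ← hc2]

lemma cayley_im {W : Matrix n n ℂ} (hsym : Wᵀ = W)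
    (hP : (1 - W.map (starRingEnd ℂ) * W).PosDef) :
    (((Complex.I • ((1 + W) * (1 - W)⁻¹)).map Complex.im)).PosDef := by
  have hdet := disk_det hsym hP
  set A : Matrix n n ℂ := 1 - W with hA
  have hAH : Aᴴ = 1 - Wᴴ := by rw [hA, conjTranspose_sub, conjTranspose_one]
  have hdetH : IsUnit Aᴴ.det := by rw [Matrix.det_conjTranspose]; exact hdet.star
  have hΩsym := cayley_symm hsym hdet
  set Ω := Complex.I • ((1 + W) * A⁻¹) with hΩ
  have hWH : W.map (starRingEnd ℂ) = Wᴴ := map_conj_eq_conjTranspose hsym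
  have hΩH : Ωᴴ = (-Complex.I) • ((A⁻¹)ᴴ * (1 + Wᴴ)) := by
    rw [hΩ, conjTranspose_smul, conjTranspose_mul, conjTranspose_add, conjTranspose_one]
    simp [Complex.conj_I]
  have e1' : (1 + W) * A⁻¹ = (A⁻¹)ᴴ * ((1 - Wᴴ) * (1 + W)) * A⁻¹ := by
    rw [Matrix.conjTranspose_nonsing_inv, ← hAH, ← Matrix.mul_assoc (Aᴴ⁻¹) Aᴴ (1 + W),
      Matrix.nonsing_inv_mul _ hdetH, Matrix.one_mul]
  have e2' : (A⁻¹)ᴴ * (1 + Wᴴ) = (A⁻¹)ᴴ * ((1 + Wᴴ) * (1 - W)) * A⁻¹ := by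
    rw [← hA, Matrix.mul_assoc ((A⁻¹)ᴴ) ((1 + Wᴴ) * A) A⁻¹, Matrix.mul_assoc (1 + Wᴴ) A A⁻¹,
      Matrix.mul_nonsing_inv _ hdet, Matrix.mul_one]
  have hkey : Ω - Ωᴴ = (2 * Complex.I) • ((A⁻¹)ᴴ * (1 - Wᴴ * W) * A⁻¹) := by
    calc Ω - Ωᴴ = Complex.I • ((1 + W) * A⁻¹ + (A⁻¹)ᴴ * (1 + Wᴴ)) := by
          rw [hΩH, neg_smul, sub_neg_eq_add, hΩ, ← smul_add]
      _ = Complex.I • ((A⁻¹)ᴴ * ((1 - Wᴴ) * (1 + W) + (1 + Wᴴ) * (1 - W)) * A⁻¹) := by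
          rw [e1', e2']
          congr 1
          noncomm_ring
      _ = Complex.I • ((A⁻¹)ᴴ * ((1 - Wᴴ * W) + (1 - Wᴴ * W)) * A⁻¹) := by
          have h5 : (1 - Wᴴ) * (1 + W) + (1 + Wᴴ) * (1 - W)
              = (1 - Wᴴ * W) + (1 - Wᴴ * W) := by noncomm_ring
          rw [h5]
      _ = (2 * Complex.I) • ((A⁻¹)ᴴ * (1 - Wᴴ * W) * A⁻¹) := by
          rw [two_mul, add_smul,
            show (A⁻¹)ᴴ * ((1 - Wᴴ * W) + (1 - Wᴴ * W)) * A⁻¹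
              = (A⁻¹)ᴴ * (1 - Wᴴ * W) * A⁻¹ + (A⁻¹)ᴴ * (1 - Wᴴ * W) * A⁻¹ by noncomm_ring,
            smul_add]
  apply posDef_of_map
  · ext i j
    have := congrFun (congrFun hΩsym i) j
    simp only [transpose_apply, Matrix.map_apply]
    rw [show Ω j i = Ω i j from this]
  · have h2 : (2 * Complex.I) • ((Ω.map Complex.im).map Complex.ofReal)
        = (2 * Complex.I) • ((A⁻¹)ᴴ * (1 - Wᴴ * W) * A⁻¹) := by
      rw [← sub_conjTranspose_eq hΩsym, hkey]
    have h2I : (2 * Complex.I) ≠ 0 := by simp [Complex.I_ne_zero]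
    have h3 := smul_right_injective (Matrix n n ℂ) h2I h2
    rw [h3]
    exact posDef_conj (by rwa [hWH] at hP) _ (Matrix.isUnit_nonsing_inv_det _ hdet)

lemma siegel_det {Ω : Matrix n n ℂ} (hsym : Ωᵀ = Ω) (hY : (Ω.map Complex.im).PosDef) :
    IsUnit (Ω + Complex.I • 1).det := by
  set C := Ω + Complex.I • (1 : Matrix n n ℂ) with hC
  rw [isUnit_iff_ne_zero]
  intro hd0
  obtain ⟨v, hv0, hveq⟩ := Matrix.exists_mulVec_eq_zero_iff.mpr hd0
  have hq : star v ⬝ᵥ (C *ᵥ v) = 0 := by rw [hveq, dotProduct_zero]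
  have hsub := quad_sub_conjTranspose C v
  rw [hq, star_zero, sub_zero] at hsub
  have hCC : C - Cᴴ
      = (2 * Complex.I) • ((Ω.map Complex.im).map Complex.ofReal + 1) := by
    rw [hC, conjTranspose_add, conjTranspose_smul, conjTranspose_one, smul_add,
      ← sub_conjTranspose_eq hsym]
    simp only [RCLike.star_def, Complex.conj_I, neg_smul]
    rw [show (2 * Complex.I) • (1 : Matrix n n ℂ)
        = Complex.I • 1 + Complex.I • (1 : Matrix n n ℂ) by rw [two_mul, add_smul]]
    abel
  have hpos : (((Ω.map Complex.im).map Complex.ofReal) + 1).PosDef :=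
    (map_posDef hY).add Matrix.PosDef.one
  have hqq := hpos.dotProduct_mulVec_pos hv0
  rw [hCC, smul_mulVec, dotProduct_smul, smul_eq_mul] at hsub
  have h2I : (2 * Complex.I) ≠ 0 := by simp [Complex.I_ne_zero]
  exact (mul_ne_zero h2I (ne_of_gt hqq)) hsub.symm

lemma cayleyInv_symm {Ω : Matrix n n ℂ} (hsym : Ωᵀ = Ω)
    (hdet : IsUnit (Ω + Complex.I • 1).det) :
    ((Ω - Complex.I • 1) * (Ω + Complex.I • 1)⁻¹)ᵀ
      = (Ω - Complex.I • 1) * (Ω + Complex.I • 1)⁻¹ := by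
  have hcomm : (Ω - Complex.I • 1) * (Ω + Complex.I • 1)
      = (Ω + Complex.I • 1) * (Ω - Complex.I • 1) := by
    simp only [mul_add, add_mul, sub_mul, mul_sub, Matrix.mul_smul, Matrix.smul_mul,
      Matrix.mul_one, Matrix.one_mul]
    abel
  have hc2 := commute_nonsing_inv hcomm hdet
  have hCT : (Ω + Complex.I • 1)ᵀ = Ω + Complex.I • 1 := by
    rw [transpose_add, transpose_smul, transpose_one, hsym]
  have hDT : (Ω - Complex.I • 1)ᵀ = Ω - Complex.I • 1 := by
    rw [transpose_sub, transpose_smul, transpose_one, hsym]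
  rw [transpose_mul, Matrix.transpose_nonsing_inv, hCT, hDT, ← hc2]

lemma cayleyInv_disk {Ω : Matrix n n ℂ} (hsym : Ωᵀ = Ω) (hY : (Ω.map Complex.im).PosDef) :
    (1 - ((Ω - Complex.I • 1) * (Ω + Complex.I • 1)⁻¹).map (starRingEnd ℂ)
      * ((Ω - Complex.I • 1) * (Ω + Complex.I • 1)⁻¹)).PosDef := by
  have hdet := siegel_det hsym hY
  set C := Ω + Complex.I • (1 : Matrix n n ℂ) with hC
  set Ym := (Ω.map Complex.im).map Complex.ofReal with hYm
  set V := (Ω - Complex.I • 1) * C⁻¹ with hV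
  have hdetH : IsUnit Cᴴ.det := by rw [Matrix.det_conjTranspose]; exact hdet.star
  have hdetHinv : (C⁻¹)ᴴ = (Cᴴ)⁻¹ := Matrix.conjTranspose_nonsing_inv C
  have hVsym : Vᵀ = V := cayleyInv_symm hsym hdet
  have hVH : Vᴴ = (C⁻¹)ᴴ * (Ωᴴ + Complex.I • 1) := by
    rw [hV, conjTranspose_mul, conjTranspose_sub, conjTranspose_smul, conjTranspose_one]
    simp only [RCLike.star_def, Complex.conj_I, neg_smul, sub_neg_eq_add]
  have hCH : Cᴴ = Ωᴴ - Complex.I • 1 := by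
    rw [hC, conjTranspose_add, conjTranspose_smul, conjTranspose_one]
    simp only [RCLike.star_def, Complex.conj_I, neg_smul, ← sub_eq_add_neg]
  have hone : (1 : Matrix n n ℂ) = (C⁻¹)ᴴ * (Cᴴ * C) * C⁻¹ := by
    rw [hdetHinv, ← Matrix.mul_assoc (Cᴴ⁻¹) Cᴴ C, Matrix.nonsing_inv_mul _ hdetH,
      Matrix.one_mul, Matrix.mul_nonsing_inv _ hdet]
  have hkey : 1 - Vᴴ * V
      = (C⁻¹)ᴴ * (Cᴴ * C - (Ωᴴ + Complex.I • 1) * (Ω - Complex.I • 1)) * C⁻¹ := by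
    rw [hVH, hV]
    nth_rewrite 1 [hone]
    noncomm_ring
  have hbr : Cᴴ * C - (Ωᴴ + Complex.I • 1) * (Ω - Complex.I • 1) = (4 : ℂ) • Ym := by
    have h6 : ((4 : ℂ)) • Ym = (2 * Complex.I) • (Ωᴴ - Ω) := by
      rw [← neg_sub Ω Ωᴴ, smul_neg, sub_conjTranspose_eq hsym, smul_smul,
        show (2 * Complex.I) * (2 * Complex.I) = (-4 : ℂ) by
          rw [show (2 * Complex.I) * (2 * Complex.I) = 4 * (Complex.I * Complex.I) by ring,
            Complex.I_mul_I]; norm_num,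
        neg_smul, neg_neg]
    rw [h6, hCH, hC]
    simp only [mul_add, add_mul, sub_mul, mul_sub, Matrix.mul_smul, Matrix.smul_mul,
      Matrix.mul_one, Matrix.one_mul, smul_smul, smul_sub, two_mul, add_smul]
    abel
  have hYmP : Ym.PosDef := map_posDef hY
  have hP4 : ((4 : ℂ) • Ym).PosDef := by
    rw [show (4 : ℂ) = 1 + 1 + (1 + 1) by norm_num]
    simp only [add_smul, one_smul]
    exact (hYmP.add hYmP).add (hYmP.add hYmP)
  rw [map_conj_eq_conjTranspose hVsym, hkey, hbr]
  exact posDef_conj hP4 _ (Matrix.isUnit_nonsing_inv_det _ hdet)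

lemma two_I_ne : (2 * Complex.I : ℂ) ≠ 0 := by simp [Complex.I_ne_zero]

lemma cayley_left {W : Matrix n n ℂ} (hdet : IsUnit (1 - W).det) :
    ((Complex.I • ((1 + W) * (1 - W)⁻¹)) - Complex.I • 1)
      * ((Complex.I • ((1 + W) * (1 - W)⁻¹)) + Complex.I • 1)⁻¹ = W := by
  set A : Matrix n n ℂ := 1 - W with hA
  have hCA : (Complex.I • ((1 + W) * A⁻¹) + Complex.I • 1) * A
      = (2 * Complex.I) • 1 := by
    rw [add_mul, Matrix.smul_mul, Matrix.smul_mul, Matrix.one_mul, Matrix.mul_assoc,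
      Matrix.nonsing_inv_mul _ hdet, Matrix.mul_one, ← smul_add,
      show (1 + W) + A = (1 : Matrix n n ℂ) + 1 by rw [hA]; abel,
      smul_add, two_mul, add_smul]
  have hCinv : (Complex.I • ((1 + W) * A⁻¹) + Complex.I • 1)⁻¹
      = (2 * Complex.I)⁻¹ • A := by
    apply Matrix.inv_eq_right_inv
    rw [Matrix.mul_smul, hCA, smul_smul, inv_mul_cancel₀ two_I_ne, one_smul]
  have hsub : Complex.I • ((1 + W) * A⁻¹) - Complex.I • 1
      = Complex.I • ((W + W) * A⁻¹) := by
    rw [← smul_sub]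
    congr 1
    rw [show (1 + W) * A⁻¹ - 1 = ((1 + W) - A) * A⁻¹ by
        rw [sub_mul, Matrix.mul_nonsing_inv _ hdet],
      show (1 + W) - A = W + W by rw [hA]; abel]
  rw [hsub, hCinv, Matrix.smul_mul, Matrix.mul_smul, smul_smul, Matrix.mul_assoc,
    Matrix.nonsing_inv_mul _ hdet, Matrix.mul_one,
    show Complex.I * (2 * Complex.I)⁻¹ = (2 : ℂ)⁻¹ by
      field_simp,
    show W + W = (2 : ℂ) • W by rw [two_smul], smul_smul,
    inv_mul_cancel₀ (two_ne_zero), one_smul]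

lemma cayley_right {Ω : Matrix n n ℂ} (hdet : IsUnit (Ω + Complex.I • 1).det) :
    Complex.I • ((1 + (Ω - Complex.I • 1) * (Ω + Complex.I • 1)⁻¹)
      * (1 - (Ω - Complex.I • 1) * (Ω + Complex.I • 1)⁻¹)⁻¹) = Ω := by
  set C : Matrix n n ℂ := Ω + Complex.I • 1 with hC
  set V : Matrix n n ℂ := (Ω - Complex.I • 1) * C⁻¹ with hV
  have h1mV : 1 - V = (2 * Complex.I) • C⁻¹ := by
    have h0 : (C - (Ω - Complex.I • 1)) * C⁻¹ = 1 - V := by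
      rw [sub_mul, Matrix.mul_nonsing_inv _ hdet, hV]
    rw [← h0, show C - (Ω - Complex.I • 1) = (2 * Complex.I) • 1 by
        rw [hC, two_mul, add_smul]; abel,
      Matrix.smul_mul, Matrix.one_mul]
  have h1pV : 1 + V = (Ω + Ω) * C⁻¹ := by
    have h0 : (C + (Ω - Complex.I • 1)) * C⁻¹ = 1 + V := by
      rw [add_mul, Matrix.mul_nonsing_inv _ hdet, hV]
    rw [← h0, show C + (Ω - Complex.I • 1) = Ω + Ω by rw [hC]; abel]
  have hinv : (1 - V)⁻¹ = (2 * Complex.I)⁻¹ • C := by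
    rw [h1mV]
    apply Matrix.inv_eq_right_inv
    rw [Matrix.smul_mul, Matrix.mul_smul, smul_smul, Matrix.nonsing_inv_mul _ hdet,
      mul_inv_cancel₀ two_I_ne, one_smul]
  rw [h1pV, hinv, Matrix.mul_smul, Matrix.mul_assoc, Matrix.nonsing_inv_mul _ hdet,
    Matrix.mul_one, smul_smul,
    show Complex.I * (2 * Complex.I)⁻¹ = (2 : ℂ)⁻¹ by field_simp,
    show Ω + Ω = (2 : ℂ) • Ω by rw [two_smul], smul_smul,
    inv_mul_cancel₀ (two_ne_zero), one_smul]

end Helpers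

/-- The Cayley transform is a bijection from `𝔻_g` onto `ℍ_g` with inverse `Ψ_g`. -/
theorem stmt_7 (g : ℕ) (hg : 1 ≤ g) :
    (∀ W : Matrix (Fin g) (Fin g) ℂ, inDisk g W →
      IsUnit (1 - W).det ∧ inSiegel g (cayley g W)) ∧
    (∀ Ω : Matrix (Fin g) (Fin g) ℂ, inSiegel g Ω →
      IsUnit (Ω + Complex.I • 1).det ∧ inDisk g (cayleyInv g Ω)) ∧
    (∀ W : Matrix (Fin g) (Fin g) ℂ, inDisk g W → cayleyInv g (cayley g W) = W) ∧
    (∀ Ω : Matrix (Fin g) (Fin g) ℂ, inSiegel g Ω → cayley g (cayleyInv g Ω) = Ω) := by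
  refine ⟨fun W hW => ?_, fun Ω hΩ => ?_, fun W hW => ?_, fun Ω hΩ => ?_⟩
  · obtain ⟨hsym, hP⟩ := hW
    exact ⟨disk_det hsym hP, cayley_symm hsym (disk_det hsym hP), cayley_im hsym hP⟩
  · obtain ⟨hsym, hY⟩ := hΩ
    exact ⟨siegel_det hsym hY, cayleyInv_symm hsym (siegel_det hsym hY), cayleyInv_disk hsym hY⟩
  · obtain ⟨hsym, hP⟩ := hW
    exact cayley_left (disk_det hsym hP)
  · obtain ⟨hsym, hY⟩ := hΩ
    exact cayley_right (siegel_det hsym hY)
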